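/- The first band of the Laplacian on the body-centered cubic lattice is [0,1] and the second band is [1, 11/7]: with λ_n(θ) = 1 − c₀/14 + (−1)^n/2·√(c₀²/49 + (2/7)(1+c₁)(1+c₂)(1+c₃)) where c_j = cos θ_j and c₀ = c₁+c₂+c₃, one has min_θ λ₁(θ) = 0, max_θ λ₁(θ) = 1, min_θ λ₂(θ) = 1, and max_θ λ₂(θ) = 11/7, where θ ranges over [0,2π]³. -/

import Mathlib

open Real

/-- The first band of the Laplacian on the body-centered cubic lattice is `[0,1]`
and the second is `[1, 11/7]`: the explicit eigenvalue functions `λ₁, λ₂` attain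
minimum/maximum `0, 1` and `1, 11/7` respectively over `θ ∈ [0,2π]³`. -/
theorem bcc_band_extrema
    (lam : Fin 2 → (Fin 3 → ℝ) → ℝ)
    (hlam : ∀ (n : Fin 2) (θ : Fin 3 → ℝ), lam n θ =
      1 - (Real.cos (θ 0) + Real.cos (θ 1) + Real.cos (θ 2)) / 14
        + (-1) ^ ((n : ℕ) + 1) / 2 *
          Real.sqrt ((Real.cos (θ 0) + Real.cos (θ 1) + Real.cos (θ 2)) ^ 2 / 49 +
            (2 / 7) * (1 + Real.cos (θ 0)) * (1 + Real.cos (θ 1)) * (1 + Real.cos (θ 2)))) :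
    IsLeast {x | ∃ θ : Fin 3 → ℝ, (∀ j, θ j ∈ Set.Icc 0 (2 * π)) ∧ x = lam 0 θ} 0 ∧
    IsGreatest {x | ∃ θ : Fin 3 → ℝ, (∀ j, θ j ∈ Set.Icc 0 (2 * π)) ∧ x = lam 0 θ} 1 ∧
    IsLeast {x | ∃ θ : Fin 3 → ℝ, (∀ j, θ j ∈ Set.Icc 0 (2 * π)) ∧ x = lam 1 θ} 1 ∧
    IsGreatest {x | ∃ θ : Fin 3 → ℝ, (∀ j, θ j ∈ Set.Icc 0 (2 * π)) ∧ x = lam 1 θ} (11 / 7) := by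
  have hπ := Real.pi_pos
  have key : ∀ θ : Fin 3 → ℝ,
      0 ≤ lam 0 θ ∧ lam 0 θ ≤ 1 ∧ 1 ≤ lam 1 θ ∧ lam 1 θ ≤ 11 / 7 := by
    intro θ
    have e0 := hlam 0 θ
    have e1 := hlam 1 θ
    set a := Real.cos (θ 0) with ha
    set b := Real.cos (θ 1) with hb
    set c := Real.cos (θ 2) with hc
    have hal : -1 ≤ a := Real.neg_one_le_cos _
    have hau : a ≤ 1 := Real.cos_le_one _
    have hbl : -1 ≤ b := Real.neg_one_le_cos _
    have hbu : b ≤ 1 := Real.cos_le_one _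
    have hcl : -1 ≤ c := Real.neg_one_le_cos _
    have hcu : c ≤ 1 := Real.cos_le_one _
    clear_value a b c
    clear ha hb hc
    have hP : 0 ≤ (1 + a) * (1 + b) * (1 + c) :=
      mul_nonneg (mul_nonneg (by linarith) (by linarith)) (by linarith)
    set s := Real.sqrt ((a + b + c) ^ 2 / 49 + 2 / 7 * (1 + a) * (1 + b) * (1 + c)) with hs
    have hsnn : 0 ≤ s := Real.sqrt_nonneg _
    have hlow : |a + b + c| / 7 ≤ s := by
      rw [hs]
      have h1 : Real.sqrt (((a + b + c) / 7) ^ 2) ≤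
          Real.sqrt ((a + b + c) ^ 2 / 49 + 2 / 7 * (1 + a) * (1 + b) * (1 + c)) :=
        Real.sqrt_le_sqrt (by nlinarith)
      rwa [Real.sqrt_sq_eq_abs, abs_div, abs_of_pos (by norm_num : (0:ℝ) < 7)] at h1
    have hup1 : s ≤ 2 - (a + b + c) / 7 := by
      rw [hs]
      have hle : (a + b + c) ^ 2 / 49 + 2 / 7 * (1 + a) * (1 + b) * (1 + c) ≤
          (2 - (a + b + c) / 7) ^ 2 := by
        nlinarith [mul_nonneg (by linarith : (0:ℝ) ≤ 1-a) (by linarith : (0:ℝ) ≤ 1-b),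
          mul_nonneg (by linarith : (0:ℝ) ≤ 1+a) (by linarith : (0:ℝ) ≤ 1+b),
          mul_nonneg (mul_nonneg (by linarith : (0:ℝ) ≤ 1+a) (by linarith : (0:ℝ) ≤ 1+b))
            (by linarith : (0:ℝ) ≤ 1-c)]
      calc Real.sqrt ((a + b + c) ^ 2 / 49 + 2 / 7 * (1 + a) * (1 + b) * (1 + c))
          ≤ Real.sqrt ((2 - (a + b + c) / 7) ^ 2) := Real.sqrt_le_sqrt hle
        _ = 2 - (a + b + c) / 7 := Real.sqrt_sq (by linarith)
    have hup2 : s ≤ (8 + (a + b + c)) / 7 := by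
      rw [hs]
      have hle : (a + b + c) ^ 2 / 49 + 2 / 7 * (1 + a) * (1 + b) * (1 + c) ≤
          ((8 + (a + b + c)) / 7) ^ 2 := by
        nlinarith [mul_nonneg (by linarith : (0:ℝ) ≤ 1-a) (by linarith : (0:ℝ) ≤ 1-b),
          mul_nonneg (by linarith : (0:ℝ) ≤ 1+a) (by linarith : (0:ℝ) ≤ 1+b),
          mul_nonneg (mul_nonneg (by linarith : (0:ℝ) ≤ 1+a) (by linarith : (0:ℝ) ≤ 1+b))
            (by linarith : (0:ℝ) ≤ 1-c)]
      calc Real.sqrt ((a + b + c) ^ 2 / 49 + 2 / 7 * (1 + a) * (1 + b) * (1 + c))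
          ≤ Real.sqrt (((8 + (a + b + c)) / 7) ^ 2) := Real.sqrt_le_sqrt hle
        _ = (8 + (a + b + c)) / 7 := Real.sqrt_sq (by linarith)
    have h0 : lam 0 θ = 1 - (a + b + c) / 14 - s / 2 := by rw [e0, hs]; norm_num; ring
    have h1 : lam 1 θ = 1 - (a + b + c) / 14 + s / 2 := by rw [e1, hs]; norm_num; ring
    have habs1 : -(a + b + c) ≤ |a + b + c| := neg_le_abs _
    have habs2 : (a + b + c) ≤ |a + b + c| := le_abs_self _
    exact ⟨by rw [h0]; linarith, by rw [h0]; linarith, by rw [h1]; linarith,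
      by rw [h1]; linarith⟩
  have v00 : lam 0 (fun _ => 0) = 0 := by
    rw [hlam]
    simp only [Real.cos_zero]
    rw [show ((1:ℝ) + 1 + 1) ^ 2 / 49 + 2 / 7 * (1 + 1) * (1 + 1) * (1 + 1) = (11/7)^2 by
      norm_num, Real.sqrt_sq (by norm_num)]
    norm_num
  have v02 : lam 1 (fun _ => 0) = 11 / 7 := by
    rw [hlam]
    simp only [Real.cos_zero]
    rw [show ((1:ℝ) + 1 + 1) ^ 2 / 49 + 2 / 7 * (1 + 1) * (1 + 1) * (1 + 1) = (11/7)^2 by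
      norm_num, Real.sqrt_sq (by norm_num)]
    norm_num
  have v01 : lam 0 (fun _ => π) = 1 := by
    rw [hlam]
    simp only [Real.cos_pi]
    rw [show ((-1:ℝ) + -1 + -1) ^ 2 / 49 + 2 / 7 * (1 + -1) * (1 + -1) * (1 + -1) = (3/7)^2 by
      norm_num, Real.sqrt_sq (by norm_num)]
    norm_num
  have v11 : lam 1 ![π, 0, 0] = 1 := by
    rw [hlam]
    norm_num [Matrix.cons_val_zero, Matrix.cons_val_one, Matrix.head_cons, Real.cos_pi,
      Real.cos_zero]
    have h49 : Real.sqrt 49 = 7 := by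
      rw [show (49:ℝ) = 7 ^ 2 by norm_num]; exact Real.sqrt_sq (by norm_num)
    have h2 : (![π, 0, 0] : Fin 3 → ℝ) 2 = 0 := rfl
    rw [h2]; norm_num
  have mem0 : (0:ℝ) ∈ Set.Icc 0 (2 * π) := ⟨le_refl _, by linarith⟩
  have memπ : (π:ℝ) ∈ Set.Icc 0 (2 * π) := ⟨by linarith, by linarith⟩
  refine ⟨⟨⟨fun _ => 0, fun _ => mem0, v00.symm⟩, ?_⟩,
    ⟨⟨fun _ => π, fun _ => memπ, v01.symm⟩, ?_⟩,
    ⟨⟨![π, 0, 0], ?_, v11.symm⟩, ?_⟩,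
    ⟨⟨fun _ => 0, fun _ => mem0, v02.symm⟩, ?_⟩⟩
  · rintro x ⟨θ, -, rfl⟩; exact (key θ).1
  · rintro x ⟨θ, -, rfl⟩; exact (key θ).2.1
  · intro j
    fin_cases j
    · exact memπ
    · exact mem0
    · exact mem0
  · rintro x ⟨θ, -, rfl⟩; exact (key θ).2.2.1
  · rintro x ⟨θ, -, rfl⟩; exact (key θ).2.2.2
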